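/- A deformation A + B(α_1,...,α_k) of a square complex matrix A, holomorphic at 0 with B(0)=0, is versal if and only if every complex matrix M of the same size can be written as M = P + (AR − RA) for some matrix R and some matrix P in the linear span of the partial derivatives ∂B/∂α_i at 0; i.e., versality is equivalent to the tangent-space condition C^{n×n} = T + [A, C^{n×n}], where T is the span of the tangent vectors of the deformation. -/

import Mathlib

open Matrix

noncomputable instance {m n : ℕ} : NormedAddCommGroup (Matrix (Fin m) (Fin n) ℂ) :=
  Matrix.frobeniusNormedAddCommGroup

noncomputable instance {m n : ℕ} : NormedSpace ℂ (Matrix (Fin m) (Fin n) ℂ) :=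
  Matrix.frobeniusNormedSpace

noncomputable instance {n : ℕ} : NormedRing (Matrix (Fin n) (Fin n) ℂ) :=
  Matrix.frobeniusNormedRing

noncomputable instance {n : ℕ} : NormedAlgebra ℂ (Matrix (Fin n) (Fin n) ℂ) :=
  Matrix.frobeniusNormedAlgebra

/-- Analytic local inverse of an analytic map whose derivative at `0` is the identity. -/
lemma analytic_local_inverse {E : Type*} [NormedAddCommGroup E] [NormedSpace ℂ E]
    [CompleteSpace E] {f : E → E} (hf : AnalyticAt ℂ f 0)
    (hd : HasFDerivAt f (ContinuousLinearMap.id ℂ E) 0) :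
    ∃ g : E → E, AnalyticAt ℂ g (f 0) ∧ g (f 0) = 0 ∧ ∀ᶠ y in nhds (f 0), f (g y) = y := by
  have hfd : fderiv ℂ f 0 = ContinuousLinearMap.id ℂ E := hd.fderiv
  have hstrict : HasStrictFDerivAt f
      ((ContinuousLinearEquiv.refl ℂ E : E ≃L[ℂ] E) : E →L[ℂ] E) 0 := by
    have h := hf.hasStrictFDerivAt
    rw [hfd] at h
    exact h
  set φ := hstrict.toOpenPartialHomeomorph f with hφdef
  have hsrc : (0 : E) ∈ φ.source := hstrict.mem_toOpenPartialHomeomorph_source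
  have hcoe : ⇑φ = f := hstrict.toOpenPartialHomeomorph_coe
  have hφan : AnalyticAt ℂ φ 0 := by rw [hcoe]; exact hf
  have hfdφ : fderiv ℂ φ 0 = ((ContinuousLinearEquiv.refl ℂ E : E ≃L[ℂ] E) : E →L[ℂ] E) := by
    rw [hcoe, hfd]; rfl
  have hsymm : AnalyticAt ℂ φ.symm (φ 0) := φ.analyticAt_symm' hsrc hφan hfdφ
  have hφ0 : φ 0 = f 0 := by rw [hcoe]
  refine ⟨φ.symm, ?_, ?_, ?_⟩
  · rw [← hφ0]; exact hsymm
  · have h3 : φ.symm (φ 0) = 0 := φ.left_inv hsrc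
    rwa [hφ0] at h3
  · have htgt : f 0 ∈ φ.target := by
      have h4 := φ.map_source hsrc
      rwa [hφ0] at h4
    filter_upwards [φ.open_target.mem_nhds htgt] with y hy
    have h5 := φ.right_inv hy
    rwa [hcoe] at h5

/-- A deformation `𝒜` of `A` (holomorphic family with `𝒜 0 = A`) is versal if every
nearby matrix `A + E` reduces to `𝒜 (h E)` by a similarity `S E` depending
holomorphically on `E` with `S 0 = I`. -/
def IsVersal {n k : ℕ} (A : Matrix (Fin n) (Fin n) ℂ)
    (𝒜 : (Fin k → ℂ) → Matrix (Fin n) (Fin n) ℂ) : Prop :=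
  ∃ (S : Matrix (Fin n) (Fin n) ℂ → Matrix (Fin n) (Fin n) ℂ)
    (h : Matrix (Fin n) (Fin n) ℂ → (Fin k → ℂ)),
    AnalyticAt ℂ S 0 ∧ AnalyticAt ℂ h 0 ∧ S 0 = 1 ∧ h 0 = 0 ∧
    ∀ᶠ E in nhds 0, 𝒜 (h E) * S E = S E * (A + E)

section Aux

variable {n k : ℕ} (A : Matrix (Fin n) (Fin n) ℂ)
  (B : (Fin k → ℂ) → Matrix (Fin n) (Fin n) ℂ)

/-- Decomposition of the derivative of `B` over the standard basis. -/
lemma fderiv_sum_single (c : Fin k → ℂ) :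
    fderiv ℂ B 0 c = ∑ i, c i • fderiv ℂ B 0 (Pi.single i 1) := by
  have hc : ∑ i, Pi.single i (c i) = c := Finset.univ_sum_single c
  conv_lhs => rw [← hc]
  rw [map_sum]
  refine Finset.sum_congr rfl fun i _ => ?_
  rw [← (fderiv ℂ B 0).map_smul]
  congr 1
  ext j
  simp [Pi.single_apply]

lemma mem_span_iff_fderiv (P : Matrix (Fin n) (Fin n) ℂ) :
    P ∈ Submodule.span ℂ (Set.range fun i : Fin k => fderiv ℂ B 0 (Pi.single i 1)) ↔
      ∃ c : Fin k → ℂ, fderiv ℂ B 0 c = P := by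
  rw [Submodule.mem_span_range_iff_exists_fun]
  constructor
  · rintro ⟨c, hc⟩; exact ⟨c, by rw [fderiv_sum_single B c, hc]⟩
  · rintro ⟨c, hc⟩; exact ⟨c, by rw [← fderiv_sum_single B c, hc]⟩

/-- The forward direction: versality implies the tangent space condition. -/
lemma versal_to_tangent (hB : AnalyticAt ℂ B 0) (hB0 : B 0 = 0)
    (hV : IsVersal A (fun α => A + B α)) :
    ∀ M : Matrix (Fin n) (Fin n) ℂ,
      ∃ R P : Matrix (Fin n) (Fin n) ℂ,
        P ∈ Submodule.span ℂ
          (Set.range fun i : Fin k => fderiv ℂ B 0 (Pi.single i 1)) ∧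
        M = P + (A * R - R * A) := by
  obtain ⟨S, h, hS, hh, hS0, hh0, heq⟩ := hV
  intro M
  have hBd : HasFDerivAt B (fderiv ℂ B 0) 0 := hB.differentiableAt.hasFDerivAt
  have hSd : HasFDerivAt S (fderiv ℂ S 0) 0 := hS.differentiableAt.hasFDerivAt
  have hhd : HasFDerivAt h (fderiv ℂ h 0) 0 := hh.differentiableAt.hasFDerivAt
  have hBh : HasFDerivAt (fun E : Matrix (Fin n) (Fin n) ℂ => B (h E))
      ((fderiv ℂ B 0).comp (fderiv ℂ h 0)) 0 := by
    have hB2 : HasFDerivAt B (fderiv ℂ B 0) (h 0) := by rw [hh0]; exact hBd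
    exact hB2.comp 0 hhd
  have hf : HasFDerivAt (fun E : Matrix (Fin n) (Fin n) ℂ => (A + B (h E)) * S E)
      ((A + B (h 0)) • fderiv ℂ S 0 +
        ((fderiv ℂ B 0).comp (fderiv ℂ h 0)).smulRight (S 0)) 0 :=
    (hBh.const_add A).mul' hSd
  have hg : HasFDerivAt (fun E : Matrix (Fin n) (Fin n) ℂ => S E * (A + E))
      (S 0 • (ContinuousLinearMap.id ℂ (Matrix (Fin n) (Fin n) ℂ)) +
        (fderiv ℂ S 0).smulRight (A + 0)) 0 :=
    hSd.mul' ((hasFDerivAt_id (0 : Matrix (Fin n) (Fin n) ℂ)).const_add A)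
  have hfg : HasFDerivAt (fun E : Matrix (Fin n) (Fin n) ℂ => (A + B (h E)) * S E)
      (S 0 • (ContinuousLinearMap.id ℂ (Matrix (Fin n) (Fin n) ℂ)) +
        (fderiv ℂ S 0).smulRight (A + 0)) 0 := by
    apply hg.congr_of_eventuallyEq
    filter_upwards [heq] with E hE using hE
  have hEq := hf.unique hfg
  have key := ContinuousLinearMap.ext_iff.1 hEq M
  simp only [ContinuousLinearMap.add_apply, ContinuousLinearMap.smul_apply,
    ContinuousLinearMap.smulRight_apply, ContinuousLinearMap.coe_comp', Function.comp_apply,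
    ContinuousLinearMap.coe_id', id_eq, hS0, hh0, hB0, add_zero, smul_eq_mul, mul_one,
    one_mul] at key
  refine ⟨fderiv ℂ S 0 M, fderiv ℂ B 0 (fderiv ℂ h 0 M),
    (mem_span_iff_fderiv B _).2 ⟨_, rfl⟩, ?_⟩
  have h2 : M = A * (fderiv ℂ S 0 M) + fderiv ℂ B 0 (fderiv ℂ h 0 M)
      - (fderiv ℂ S 0 M) * A := by
    rw [key]; abel
  conv_lhs => rw [h2]
  abel

end Aux

/-- Arnold's tangent-space criterion: the deformation `A + B α` (with `B`
holomorphic at `0`, `B 0 = 0`) is versal iff every matrix `M` can be written as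
`P + (AR − RA)` with `P` in the span of the partial derivatives `∂B/∂α_i (0)`. -/
theorem versal_iff_tangent_space {n k : ℕ} (A : Matrix (Fin n) (Fin n) ℂ)
    (B : (Fin k → ℂ) → Matrix (Fin n) (Fin n) ℂ)
    (hB : AnalyticAt ℂ B 0) (hB0 : B 0 = 0) :
    IsVersal A (fun α => A + B α) ↔
      ∀ M : Matrix (Fin n) (Fin n) ℂ,
        ∃ R P : Matrix (Fin n) (Fin n) ℂ,
          P ∈ Submodule.span ℂ
            (Set.range fun i : Fin k => fderiv ℂ B 0 (Pi.single i 1)) ∧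
          M = P + (A * R - R * A) := by
  constructor
  · exact versal_to_tangent A B hB hB0
  · intro hT
    have hBd : HasFDerivAt B (fderiv ℂ B 0) 0 := hB.differentiableAt.hasFDerivAt
    set C : Matrix (Fin n) (Fin n) ℂ →ₗ[ℂ] Matrix (Fin n) (Fin n) ℂ :=
      LinearMap.mulLeft ℂ A - LinearMap.mulRight ℂ A with hC
    set L : ((Fin k → ℂ) × Matrix (Fin n) (Fin n) ℂ) →ₗ[ℂ] Matrix (Fin n) (Fin n) ℂ :=
      ((fderiv ℂ B 0 : (Fin k → ℂ) →L[ℂ] Matrix (Fin n) (Fin n) ℂ).toLinearMap).comp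
          (LinearMap.fst ℂ (Fin k → ℂ) (Matrix (Fin n) (Fin n) ℂ)) +
        C.comp (LinearMap.snd ℂ (Fin k → ℂ) (Matrix (Fin n) (Fin n) ℂ)) with hL
    have hLapp : ∀ p : (Fin k → ℂ) × Matrix (Fin n) (Fin n) ℂ,
        L p = fderiv ℂ B 0 p.1 + (A * p.2 - p.2 * A) := by
      intro p
      simp [hL, hC, LinearMap.mulLeft_apply, LinearMap.mulRight_apply, sub_eq_add_neg]
    have hLsurj : Function.Surjective L := by
      intro M
      obtain ⟨R, P, hP, hM⟩ := hT M
      obtain ⟨c, hc⟩ := (mem_span_iff_fderiv B P).1 hP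
      exact ⟨(c, R), by rw [hLapp, hc]; exact hM.symm⟩
    obtain ⟨g, hg⟩ := L.exists_rightInverse_of_surjective (LinearMap.range_eq_top.2 hLsurj)
    set gc : Matrix (Fin n) (Fin n) ℂ →L[ℂ] ((Fin k → ℂ) × Matrix (Fin n) (Fin n) ℂ) :=
      LinearMap.toContinuousLinearMap g with hgc
    have hg0 : g 0 = 0 := map_zero g
    set F : Matrix (Fin n) (Fin n) ℂ → Matrix (Fin n) (Fin n) ℂ := fun Y =>
      Ring.inverse (1 + (g Y).2) * ((A + B ((g Y).1)) * (1 + (g Y).2) - (1 + (g Y).2) * A)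
      with hF
    have hF0 : F 0 = 0 := by
      simp [hF, hg0, hB0, Ring.inverse_one]
    have hgan : AnalyticAt ℂ (fun Y : Matrix (Fin n) (Fin n) ℂ => g Y) 0 := gc.analyticAt 0
    have hαan : AnalyticAt ℂ (fun Y : Matrix (Fin n) (Fin n) ℂ => (g Y).1) 0 :=
      (ContinuousLinearMap.fst ℂ (Fin k → ℂ) (Matrix (Fin n) (Fin n) ℂ)).analyticAt _ |>.comp hgan
    have hXan : AnalyticAt ℂ (fun Y : Matrix (Fin n) (Fin n) ℂ => (g Y).2) 0 :=
      (ContinuousLinearMap.snd ℂ (Fin k → ℂ) (Matrix (Fin n) (Fin n) ℂ)).analyticAt _ |>.comp hgan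
    have h1Xan : AnalyticAt ℂ (fun Y : Matrix (Fin n) (Fin n) ℂ => 1 + (g Y).2) 0 :=
      analyticAt_const.add hXan
    have hinvan : AnalyticAt ℂ
        (fun Y : Matrix (Fin n) (Fin n) ℂ => Ring.inverse (1 + (g Y).2)) 0 := by
      exact AnalyticAt.comp_of_eq
        (g := (Ring.inverse : Matrix (Fin n) (Fin n) ℂ → Matrix (Fin n) (Fin n) ℂ))
        (f := fun Y : Matrix (Fin n) (Fin n) ℂ => 1 + (g Y).2)
        (analyticAt_inverse (1 : (Matrix (Fin n) (Fin n) ℂ)ˣ)) h1Xan (by simp [hg0])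
    have hBαan : AnalyticAt ℂ (fun Y : Matrix (Fin n) (Fin n) ℂ => B ((g Y).1)) 0 := by
      exact AnalyticAt.comp_of_eq (g := B)
        (f := fun Y : Matrix (Fin n) (Fin n) ℂ => (g Y).1)
        hB hαan (by simp [hg0])
    have hFan : AnalyticAt ℂ F 0 := by
      apply hinvan.mul
      exact ((analyticAt_const.add hBαan).mul h1Xan).sub (h1Xan.mul analyticAt_const)
    have hXd : HasFDerivAt (fun Y : Matrix (Fin n) (Fin n) ℂ => (g Y).2)
        ((ContinuousLinearMap.snd ℂ (Fin k → ℂ) (Matrix (Fin n) (Fin n) ℂ)).comp gc) 0 :=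
      ((ContinuousLinearMap.snd ℂ (Fin k → ℂ) (Matrix (Fin n) (Fin n) ℂ)).comp gc).hasFDerivAt
    have hαd : HasFDerivAt (fun Y : Matrix (Fin n) (Fin n) ℂ => (g Y).1)
        ((ContinuousLinearMap.fst ℂ (Fin k → ℂ) (Matrix (Fin n) (Fin n) ℂ)).comp gc) 0 :=
      ((ContinuousLinearMap.fst ℂ (Fin k → ℂ) (Matrix (Fin n) (Fin n) ℂ)).comp gc).hasFDerivAt
    set X' := (ContinuousLinearMap.snd ℂ (Fin k → ℂ) (Matrix (Fin n) (Fin n) ℂ)).comp gc with hX'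
    set α' := (ContinuousLinearMap.fst ℂ (Fin k → ℂ) (Matrix (Fin n) (Fin n) ℂ)).comp gc with hα'
    have h1Xd : HasFDerivAt (fun Y : Matrix (Fin n) (Fin n) ℂ => 1 + (g Y).2) X' 0 :=
      hXd.const_add 1
    have hinvd : HasFDerivAt
        (fun Y : Matrix (Fin n) (Fin n) ℂ => Ring.inverse (1 + (g Y).2))
        ((-ContinuousLinearMap.mulLeftRight ℂ (Matrix (Fin n) (Fin n) ℂ)
          (((1 : (Matrix (Fin n) (Fin n) ℂ)ˣ)⁻¹ : (Matrix (Fin n) (Fin n) ℂ)ˣ) : Matrix (Fin n) (Fin n) ℂ)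
          (((1 : (Matrix (Fin n) (Fin n) ℂ)ˣ)⁻¹ : (Matrix (Fin n) (Fin n) ℂ)ˣ) : Matrix (Fin n) (Fin n) ℂ)).comp X') 0 := by
      have h8 : HasFDerivAt (Ring.inverse : Matrix (Fin n) (Fin n) ℂ → _)
          (-ContinuousLinearMap.mulLeftRight ℂ (Matrix (Fin n) (Fin n) ℂ)
            (((1 : (Matrix (Fin n) (Fin n) ℂ)ˣ)⁻¹ : (Matrix (Fin n) (Fin n) ℂ)ˣ) : Matrix (Fin n) (Fin n) ℂ)
            (((1 : (Matrix (Fin n) (Fin n) ℂ)ˣ)⁻¹ : (Matrix (Fin n) (Fin n) ℂ)ˣ) : Matrix (Fin n) (Fin n) ℂ))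
          ((fun Y : Matrix (Fin n) (Fin n) ℂ => 1 + (g Y).2) 0) := by
        simp only [hg0, Prod.snd_zero, add_zero]
        exact hasFDerivAt_ringInverse (1 : (Matrix (Fin n) (Fin n) ℂ)ˣ)
      exact h8.comp 0 h1Xd
    have hBαd : HasFDerivAt (fun Y : Matrix (Fin n) (Fin n) ℂ => B ((g Y).1))
        ((fderiv ℂ B 0).comp α') 0 := by
      have h9 : HasFDerivAt B (fderiv ℂ B 0)
          ((fun Y : Matrix (Fin n) (Fin n) ℂ => (g Y).1) 0) := by
        simp only [hg0, Prod.fst_zero]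
        exact hBd
      exact h9.comp 0 hαd
    have hmd : HasFDerivAt (fun Y : Matrix (Fin n) (Fin n) ℂ => A + B ((g Y).1))
        ((fderiv ℂ B 0).comp α') 0 := hBαd.const_add A
    have hprod1 := hmd.mul' h1Xd
    have hprod2 := h1Xd.mul_const' A
    have hW := hprod1.sub hprod2
    have hFd' := hinvd.mul' hW
    have hFd : HasFDerivAt F (ContinuousLinearMap.id ℂ (Matrix (Fin n) (Fin n) ℂ)) 0 := by
      refine hFd'.congr_fderiv (Eq.symm ?_)
      refine ContinuousLinearMap.ext fun M => ?_
      have hLM := LinearMap.ext_iff.1 hg M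
      rw [LinearMap.comp_apply, LinearMap.id_apply, hLapp] at hLM
      simp only [hg0, Prod.snd_zero, Prod.fst_zero, add_zero, hB0, Ring.inverse_one,
        ContinuousLinearMap.add_apply, ContinuousLinearMap.smul_apply,
        ContinuousLinearMap.smulRight_apply, ContinuousLinearMap.coe_comp',
        Function.comp_apply, ContinuousLinearMap.coe_id', id_eq,
        ContinuousLinearMap.sub_apply, one_smul, smul_eq_mul, mul_one, one_mul,
        mul_zero, sub_self, smul_zero, Pi.mul_apply, Pi.sub_apply, MulOpposite.op_zero, zero_smul,
        MulOpposite.op_one]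
      show M = A * (g M).2 + fderiv ℂ B 0 ((g M).1) * 1 - (g M).2 * A + -(1 * (g M).2 * 1) * 0
      simp only [mul_zero, add_zero, mul_one]
      conv_lhs => rw [← hLM]
      abel
    obtain ⟨ψ, hψan, hψ0, hψinv⟩ := analytic_local_inverse hFan hFd
    rw [hF0] at hψan hψ0 hψinv
    refine ⟨fun E => 1 + (g (ψ E)).2, fun E => (g (ψ E)).1, ?_, ?_, ?_, ?_, ?_⟩
    · have hXψ : AnalyticAt ℂ (fun E => (g (ψ E)).2) 0 := by
        have h11 := hXan
        rw [← hψ0] at h11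
        exact h11.comp hψan
      exact analyticAt_const.add hXψ
    · have h12 := hαan
      rw [← hψ0] at h12
      exact h12.comp hψan
    · simp [hψ0, hg0]
    · simp [hψ0, hg0]
    · have hXψ : AnalyticAt ℂ (fun E => (g (ψ E)).2) 0 := by
        have h11 := hXan
        rw [← hψ0] at h11
        exact h11.comp hψan
      have hScont : ContinuousAt (fun E => 1 + (g (ψ E)).2) 0 :=
        (analyticAt_const.add hXψ).continuousAt
      have hunit : ∀ᶠ E in nhds (0 : Matrix (Fin n) (Fin n) ℂ),
          IsUnit (1 + (g (ψ E)).2) := by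
        have hmem : {x : Matrix (Fin n) (Fin n) ℂ | IsUnit x} ∈
            nhds ((fun E => 1 + (g (ψ E)).2) 0) := by
          apply Units.isOpen.mem_nhds
          simp [hψ0, hg0]
        exact hScont.eventually_mem hmem
      filter_upwards [hψinv, hunit] with E hFE hu
      have hmul : (1 + (g (ψ E)).2) * Ring.inverse (1 + (g (ψ E)).2) = 1 :=
        Ring.mul_inverse_cancel _ hu
      have h10 : (1 + (g (ψ E)).2) * F (ψ E) = (1 + (g (ψ E)).2) * E := by rw [hFE]
      simp only [hF] at h10
      rw [← mul_assoc, hmul, one_mul] at h10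
      show (A + B ((g (ψ E)).1)) * (1 + (g (ψ E)).2) = (1 + (g (ψ E)).2) * (A + E)
      rw [mul_add (1 + (g (ψ E)).2) A E, ← h10]
      abel
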